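/- For any virtual graph G, the S-polynomial and the flow polynomial agree at Q = 0: S_G(0) = F_G(0). -/

import Mathlib

open Polynomial

noncomputable section
open scoped Classical

/-- A ribbon graph (combinatorial map), given by a finite set of half-edges
together with a fixed-point-free involution `edgePair` (pairing the two half-edges
of each edge) and a rotation permutation `rot` whose cycles are the vertices with
their counterclockwise rotation system. -/
structure RibbonGraph where
  H : Type
  fintypeH : Fintype H
  decH : DecidableEq H
  edgePair : Equiv.Perm H
  rot : Equiv.Perm H
  edgePair_invol : ∀ h, edgePair (edgePair h) = h
  edgePair_nofix : ∀ h, edgePair h ≠ h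

namespace RibbonGraph

variable (G : RibbonGraph)

instance : Fintype G.H := G.fintypeH
instance : DecidableEq G.H := G.decH

/-- Edges are the orbits of the involution `edgePair`. -/
def edgeSetoid : Setoid G.H :=
  ⟨G.edgePair.SameCycle, ⟨fun _ => Equiv.Perm.SameCycle.refl _ _,
    fun h => h.symm, fun h h' => h.trans h'⟩⟩

def EdgeSet := Quotient G.edgeSetoid

instance : Finite G.EdgeSet := Quotient.finite _
instance : Fintype G.EdgeSet := Fintype.ofFinite _

def edgeOf (h : G.H) : G.EdgeSet := Quotient.mk G.edgeSetoid h

/-- Vertices are the orbits of the rotation `rot`. -/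
def vertexSetoid : Setoid G.H :=
  ⟨G.rot.SameCycle, ⟨fun _ => Equiv.Perm.SameCycle.refl _ _,
    fun h => h.symm, fun h h' => h.trans h'⟩⟩

def VertexSet := Quotient G.vertexSetoid

instance : Finite G.VertexSet := Quotient.finite _
instance : Fintype G.VertexSet := Fintype.ofFinite _

def vertexOf (h : G.H) : G.VertexSet := Quotient.mk G.vertexSetoid h

def numVertices : ℕ := Nat.card G.VertexSet
def numEdges : ℕ := Nat.card G.EdgeSet

/-- One step of the connectivity relation of `G − D` (`D` a set of deleted edges):
half-edges at a common vertex are connected, as are the two halves of a kept edge.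
Vertices all of whose half-edges are deleted remain as isolated components. -/
def connStep (D : Finset G.EdgeSet) (x y : G.H) : Prop :=
  G.rot.SameCycle x y ∨ (G.edgeOf x ∉ D ∧ y = G.edgePair x)

/-- `b₀(G − D)`: number of connected components of the deletion `G − D`. -/
def b0Del (D : Finset G.EdgeSet) : ℕ :=
  Nat.card (Quotient (Setoid.mk _ (Relation.EqvGen.is_equivalence (G.connStep D))))

def numEdgesDel (D : Finset G.EdgeSet) : ℕ := G.numEdges - D.card

/-- `b₁(G − D)`: the cycle rank `|E| − |V| + b₀` of the deletion. -/
def b1Del (D : Finset G.EdgeSet) : ℤ :=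
  (G.numEdgesDel D : ℤ) - (G.numVertices : ℤ) + (G.b0Del D : ℤ)

/-- One step of the face (boundary-walk) relation of `G − D`: from a kept half-edge `x`,
go to its partner and then rotate, skipping deleted half-edges. Its equivalence classes
through kept half-edges are the boundary components of `G − D`. -/
def faceStep (D : Finset G.EdgeSet) (x y : G.H) : Prop :=
  G.edgeOf x ∉ D ∧ G.edgeOf y ∉ D ∧
    ∃ m : ℕ, 0 < m ∧ y = (G.rot ^ m) (G.edgePair x) ∧
      ∀ j, 0 < j → j < m → G.edgeOf ((G.rot ^ j) (G.edgePair x)) ∈ D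

def faceSetoid (D : Finset G.EdgeSet) : Setoid G.H :=
  Setoid.mk _ (Relation.EqvGen.is_equivalence (G.faceStep D))

/-- The number of boundary components (faces) of the ribbon graph `G − D`:
face-classes of kept half-edges, plus one circle for each fully deleted vertex. -/
def facesDel (D : Finset G.EdgeSet) : ℕ :=
  Nat.card {c : Quotient (G.faceSetoid D) // ∃ h, G.edgeOf h ∉ D ∧ Quotient.mk (G.faceSetoid D) h = c}
    + Nat.card {v : G.VertexSet // ∀ h, G.vertexOf h = v → G.edgeOf h ∈ D}

/-- The genus of `G − D`, via the Euler characteristic relation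
`|V| − |E| + f = 2b₀ − 2g`, i.e. `2g = b₁ − f + b₀`. -/
def genusDel (D : Finset G.EdgeSet) : ℤ :=
  (G.b1Del D - (G.facesDel D : ℤ) + (G.b0Del D : ℤ)) / 2

/-- The `S`-polynomial state sum `S_G(Q) = Σ_{T⊆E} (−1)^{|T|} Q^{b₁(G−T) − g(G−T)}`. -/
def SPoly : Polynomial ℚ :=
  ∑ D : Finset G.EdgeSet, (-1 : Polynomial ℚ) ^ D.card * X ^ (G.b1Del D - G.genusDel D).toNat

/-- The flow polynomial state sum `F_G(Q) = Σ_{T⊆E} (−1)^{|T|} Q^{b₁(G−T)}`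
of the underlying graph. -/
def FPoly : Polynomial ℚ :=
  ∑ D : Finset G.EdgeSet, (-1 : Polynomial ℚ) ^ D.card * X ^ (G.b1Del D).toNat

/-- A bridge: an edge whose deletion increases the number of connected components. -/
def IsBridge (e : G.EdgeSet) : Prop := G.b0Del ∅ < G.b0Del {e}

/-- `e` is a coloop of the deletion `G − D`: the two boundary components of `G − D`
adjacent to (parallel to) the edge `e` coincide. -/
def IsColoopIn (D : Finset G.EdgeSet) (e : G.EdgeSet) : Prop :=
  e ∉ D ∧ ∃ a, G.edgeOf a = e ∧ Relation.EqvGen (G.faceStep D) a (G.edgePair a)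

/-- A coloop of `G`: the two boundary components adjacent to the edge coincide
(equivalently, the dual edge is a loop of the dual graph). -/
def IsColoop (e : G.EdgeSet) : Prop := G.IsColoopIn ∅ e

/-- Degree of the vertex containing the half-edge `h`: the length of its rotation cycle. -/
def vertexDegree (h : G.H) : ℕ := Nat.card {x : G.H // G.rot.SameCycle h x}

/-- Degree of a vertex: the number of half-edges incident to it. -/
def vDeg (v : G.VertexSet) : ℕ := Nat.card {h : G.H // G.vertexOf h = v}

end RibbonGraph

namespace SPolyAux
open Relation Equiv

set_option linter.unusedSectionVars false

variable {X : Type} [Fintype X] [DecidableEq X]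

/-- number of classes of the equivalence generated by `r` -/
def qc (r : X → X → Prop) : ℕ := Nat.card (Quot r)

lemma qc_le_of {r s : X → X → Prop} (h : ∀ x y, r x y → EqvGen s x y) :
    qc s ≤ qc r := by
  have : Function.Surjective (Quot.lift (fun x => Quot.mk s x)
      (fun a b hab => Quot.eqvGen_sound (h a b hab)) : Quot r → Quot s) := by
    intro q; obtain ⟨x, rfl⟩ := Quot.exists_rep q; exact ⟨Quot.mk r x, rfl⟩
  exact Nat.card_le_card_of_surjective _ this

lemma qc_eq_of {r s : X → X → Prop} (h1 : ∀ x y, r x y → EqvGen s x y)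
    (h2 : ∀ x y, s x y → EqvGen r x y) : qc r = qc s :=
  le_antisymm (qc_le_of h2) (qc_le_of h1)

/-- adding single pair (a,b) -/
def rpair (r : X → X → Prop) (a b : X) : X → X → Prop :=
  fun x y => r x y ∨ (x = a ∧ y = b)

lemma eqvGen_rpair_cases {r : X → X → Prop} {a b x y : X}
    (h : EqvGen (rpair r a b) x y) :
    EqvGen r x y ∨ (EqvGen r x a ∧ EqvGen r b y) ∨ (EqvGen r x b ∧ EqvGen r a y) := by
  induction h with
  | rel u v huv =>
    rcases huv with h | ⟨rfl, rfl⟩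
    · exact Or.inl (EqvGen.rel _ _ h)
    · exact Or.inr (Or.inl ⟨EqvGen.refl _, EqvGen.refl _⟩)
  | refl u => exact Or.inl (EqvGen.refl _)
  | symm u v _ ih =>
    rcases ih with h | ⟨h1, h2⟩ | ⟨h1, h2⟩
    · exact Or.inl h.symm
    · exact Or.inr (Or.inr ⟨h2.symm, h1.symm⟩)
    · exact Or.inr (Or.inl ⟨h2.symm, h1.symm⟩)
  | trans u v w _ _ ih1 ih2 =>
    rcases ih1 with h | ⟨h1, h2⟩ | ⟨h1, h2⟩
    · rcases ih2 with g | ⟨g1, g2⟩ | ⟨g1, g2⟩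
      · exact Or.inl (h.trans _ _ _ g)
      · exact Or.inr (Or.inl ⟨h.trans _ _ _ g1, g2⟩)
      · exact Or.inr (Or.inr ⟨h.trans _ _ _ g1, g2⟩)
    · rcases ih2 with g | ⟨g1, g2⟩ | ⟨g1, g2⟩
      · exact Or.inr (Or.inl ⟨h1, h2.trans _ _ _ g⟩)
      · exact Or.inr (Or.inl ⟨h1, g2⟩)
      · exact Or.inl (h1.trans _ _ _ g2)
    · rcases ih2 with g | ⟨g1, g2⟩ | ⟨g1, g2⟩
      · exact Or.inr (Or.inr ⟨h1, h2.trans _ _ _ g⟩)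
      · exact Or.inl (h1.trans _ _ _ g2)
      · exact Or.inr (Or.inr ⟨h1, g2⟩)

lemma qc_rpair_le (r : X → X → Prop) (a b : X) : qc (rpair r a b) ≤ qc r :=
  qc_le_of (fun x y h => EqvGen.rel _ _ (Or.inl h))

lemma qc_le_qc_rpair_add_one (r : X → X → Prop) (a b : X) :
    qc r ≤ qc (rpair r a b) + 1 := by
  classical
  set f : Quot r → Quot (rpair r a b) :=
    Quot.lift (fun x => Quot.mk _ x)
      (fun u v huv => Quot.sound (Or.inl huv)) with hf
  have key : ∀ x y : Quot r, f x = f y → x ≠ Quot.mk r a → y ≠ Quot.mk r a → x = y := by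
    intro x y hxy hxa hya
    obtain ⟨u, rfl⟩ := Quot.exists_rep x
    obtain ⟨v, rfl⟩ := Quot.exists_rep y
    have : EqvGen (rpair r a b) u v := Quot.eq.mp hxy
    rcases eqvGen_rpair_cases this with h | ⟨h1, _⟩ | ⟨h1, h2⟩
    · exact Quot.eqvGen_sound h
    · exact absurd (Quot.eqvGen_sound h1) hxa
    · exact absurd (Quot.eqvGen_sound h2.symm) hya
  have hinj : Function.Injective (fun x : Quot r =>
      if x = Quot.mk r a then (Sum.inr PUnit.unit : Quot (rpair r a b) ⊕ PUnit.{1})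
      else Sum.inl (f x)) := by
    intro x y hxy
    by_cases hx : x = Quot.mk r a
    · by_cases hy : y = Quot.mk r a
      · exact hx.trans hy.symm
      · simp [hx, hy] at hxy
    · by_cases hy : y = Quot.mk r a
      · simp [hx, hy] at hxy
      · simp [hx, hy] at hxy
        exact key x y hxy hx hy
  calc qc r ≤ Nat.card (Quot (rpair r a b) ⊕ PUnit) :=
        Nat.card_le_card_of_injective _ hinj
    _ = qc (rpair r a b) + 1 := by rw [Nat.card_sum]; simp [qc]

lemma qc_rpair_eq_of_rel {r : X → X → Prop} {a b : X} (h : EqvGen r a b) :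
    qc (rpair r a b) = qc r :=
  qc_eq_of (fun x y hxy => by
      rcases hxy with h' | ⟨rfl, rfl⟩
      · exact EqvGen.rel _ _ h'
      · exact h)
    (fun x y hxy => EqvGen.rel _ _ (Or.inl hxy))

lemma qc_rpair_lt_of_not_rel {r : X → X → Prop} {a b : X} (h : ¬ EqvGen r a b) :
    qc (rpair r a b) < qc r := by
  classical
  rcases lt_or_eq_of_le (qc_rpair_le r a b) with hlt | heq
  · exact hlt
  exfalso
  set f : Quot r → Quot (rpair r a b) :=
    Quot.lift (fun x => Quot.mk _ x)
      (fun u v huv => Quot.sound (Or.inl huv)) with hf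
  have hsurj : Function.Surjective f := by
    intro q; obtain ⟨x, rfl⟩ := Quot.exists_rep q; exact ⟨Quot.mk r x, rfl⟩
  have hbij : Function.Bijective f := by
    rw [Nat.bijective_iff_surjective_and_card]
    exact ⟨hsurj, heq.symm⟩
  have hab : f (Quot.mk r a) = f (Quot.mk r b) :=
    Quot.sound (Or.inr ⟨rfl, rfl⟩)
  have : Quot.mk r a = Quot.mk r b := hbij.injective hab
  exact h (Quot.eq.mp this)

/-- single step of a permutation -/
def sstep (g : Perm X) : X → X → Prop := fun x y => y = g x

/-- two-generator step -/
def dstep (a b : Perm X) : X → X → Prop := fun x y => y = a x ∨ y = b x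

def cyc (g : Perm X) : ℕ := qc (sstep g)
def orb2 (a b : Perm X) : ℕ := qc (dstep a b)

lemma eqvGen_sstep_pow (g : Perm X) (x : X) (n : ℕ) :
    EqvGen (sstep g) x ((g ^ n) x) := by
  induction n with
  | zero => simpa using EqvGen.refl x
  | succ k ih =>
    refine ih.trans _ _ _ (EqvGen.rel _ _ ?_)
    show (g ^ (k+1)) x = g ((g ^ k) x)
    rw [pow_succ']; rfl

lemma eqvGen_sstep_iff {g : Perm X} {x y : X} :
    EqvGen (sstep g) x y ↔ g.SameCycle x y := by
  constructor
  · intro h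
    induction h with
    | rel u v huv => exact ⟨1, by simpa [sstep] using huv.symm⟩
    | refl u => exact Perm.SameCycle.refl _ _
    | symm u v _ ih => exact ih.symm
    | trans u v w _ _ ih1 ih2 => exact ih1.trans ih2
  · rintro ⟨k, hk⟩
    rcases Int.eq_nat_or_neg k with ⟨n, rfl | rfl⟩
    · rw [zpow_natCast] at hk
      simpa [hk] using eqvGen_sstep_pow g x n
    · have hx : (g ^ n) y = x := by
        have h2 := congrArg (g ^ n) hk
        rw [← hk, ← Perm.mul_apply, ← zpow_natCast, ← zpow_add]; simp
      exact (hx ▸ eqvGen_sstep_pow g y n).symm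


lemma eqvGen_closure {r s : X → X → Prop} (h : ∀ x y, r x y → EqvGen s x y)
    {x y : X} (hxy : EqvGen r x y) : EqvGen s x y := by
  induction hxy with
  | rel u v huv => exact h _ _ huv
  | refl u => exact EqvGen.refl _
  | symm u v _ ih => exact ih.symm
  | trans u v w _ _ ih1 ih2 => exact ih1.trans _ _ _ ih2

lemma qc_le_card (r : X → X → Prop) : qc r ≤ Fintype.card X := by
  have : Function.Surjective (Quot.mk r) := Quot.exists_rep
  simpa [qc, Nat.card_eq_fintype_card] using Nat.card_le_card_of_surjective _ this

lemma eq_one_of_cyc_eq_card {α : Perm X} (h : cyc α = Fintype.card X) : α = 1 := by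
  have hsurj : Function.Surjective (Quot.mk (sstep α)) := Quot.exists_rep
  have hbij : Function.Bijective (Quot.mk (sstep α)) := by
    rw [Nat.bijective_iff_surjective_and_card]
    refine ⟨hsurj, ?_⟩
    rw [Nat.card_eq_fintype_card (α := X)]; exact h.symm
  ext x
  have hq : Quot.mk (sstep α) x = Quot.mk (sstep α) (α x) :=
    Quot.sound (rfl : sstep α x (α x))
  simpa using (hbij.injective hq).symm

lemma cyc_one : cyc (1 : Perm X) = Fintype.card X := by
  have hinj : Function.Injective (Quot.mk (sstep (1 : Perm X))) := by
    intro x y hxy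
    have hh := Quot.eq.mp hxy
    clear hxy
    induction hh with
    | rel u v huv => exact huv.symm
    | refl u => rfl
    | symm u v _ ih => exact ih.symm
    | trans u v w _ _ ih1 ih2 => exact ih1.trans ih2
  have hsurj : Function.Surjective (Quot.mk (sstep (1 : Perm X))) := Quot.exists_rep
  have := Nat.card_congr (Equiv.ofBijective _ ⟨hinj, hsurj⟩)
  simpa [qc, cyc, Nat.card_eq_fintype_card] using this.symm

lemma orb2_one_left (β : Perm X) : orb2 1 β = cyc β := by
  refine qc_eq_of (fun x y hxy => ?_) (fun x y hxy => EqvGen.rel _ _ (Or.inr hxy))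
  rcases hxy with h | h
  · simp only [Perm.one_apply] at h; subst h; exact EqvGen.refl _
  · exact EqvGen.rel _ _ h

/-- diverting lemma: if `u v` are in different cycles of `δ` then they are in the
same cycle of `swap u v * δ`. -/
lemma sameCycle_swap_mul_of_not (δ : Perm X) {u v : X} (huv : u ≠ v)
    (h : ¬ δ.SameCycle u v) : (Equiv.swap u v * δ).SameCycle u v := by
  set t := Equiv.swap u v with ht
  have hper : v ∈ Function.periodicPts (δ : X → X) := by
    rw [Function.mem_periodicPts]
    refine ⟨orderOf δ, orderOf_pos δ, ?_⟩
    show (⇑δ)^[orderOf δ] v = v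
    rw [← Equiv.Perm.coe_pow, pow_orderOf_eq_one]; rfl
  set n := Function.minimalPeriod (δ : X → X) v with hnd
  have hn : 0 < n := Function.minimalPeriod_pos_of_mem_periodicPts hper
  have key : ∀ j, j < n → ((t * δ) ^ j) v = (δ ^ j) v := by
    intro j hj
    induction j with
    | zero => simp
    | succ k ih =>
      have hk : k < n := Nat.lt_of_succ_lt hj
      have hne1 : (δ ^ (k+1)) v ≠ v := by
        intro hcon
        have : Function.IsPeriodicPt (⇑δ) (k+1) v := by
          show (⇑δ)^[k+1] v = v
          rw [← Equiv.Perm.coe_pow]; exact hcon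
        have := Function.IsPeriodicPt.minimalPeriod_le (Nat.succ_pos k) this
        omega
      have hne2 : (δ ^ (k+1)) v ≠ u := by
        intro hcon
        exact h (Perm.SameCycle.symm ⟨((k:ℤ)+1), by
          rw [show ((k:ℤ)+1) = ((k+1 : ℕ) : ℤ) by push_cast; ring, zpow_natCast]
          exact hcon⟩)
      calc ((t * δ) ^ (k+1)) v = (t * δ) (((t * δ) ^ k) v) := by
            rw [pow_succ']; rfl
        _ = t ((δ ^ (k+1)) v) := by
            rw [ih hk, pow_succ']; rfl
        _ = (δ ^ (k+1)) v := Equiv.swap_apply_of_ne_of_ne hne2 hne1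
  have hdn : (δ ^ n) v = v := by
    rw [Equiv.Perm.coe_pow, hnd]
    exact Function.iterate_minimalPeriod
  have hlast : ((t * δ) ^ n) v = u := by
    clear_value n
    obtain ⟨m, rfl⟩ : ∃ m, n = m + 1 := ⟨n - 1, by omega⟩
    have hm : m < m + 1 := Nat.lt_succ_self m
    calc ((t * δ) ^ (m+1)) v = (t * δ) (((t * δ) ^ m) v) := by rw [pow_succ']; rfl
      _ = t ((δ ^ (m+1)) v) := by rw [key m hm, pow_succ']; rfl
      _ = t v := by rw [hdn]
      _ = u := Equiv.swap_apply_right u v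
  exact Perm.SameCycle.symm ⟨(n : ℤ), by rw [zpow_natCast]; exact hlast⟩

lemma rpair_swap_incl (β : Perm X) (u v : X) :
    ∀ x y, rpair (sstep (Equiv.swap u v * β)) u v x y →
      EqvGen (rpair (sstep β) u v) x y := by
  intro x y hxy
  have hpair : EqvGen (rpair (sstep β) u v) u v := EqvGen.rel _ _ (Or.inr ⟨rfl, rfl⟩)
  rcases hxy with h | ⟨rfl, rfl⟩
  · have hstep : EqvGen (rpair (sstep β) u v) x (β x) := EqvGen.rel _ _ (Or.inl rfl)
    by_cases h1 : β x = u
    · have hy : y = v := by rw [h, Perm.mul_apply, h1, Equiv.swap_apply_left]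
      subst hy
      exact hstep.trans _ _ _ (h1 ▸ hpair)
    · by_cases h2 : β x = v
      · have hy : y = u := by rw [h, Perm.mul_apply, h2, Equiv.swap_apply_right]
        subst hy
        exact hstep.trans _ _ _ (h2 ▸ hpair.symm)
      · have hy : y = β x := by rw [h, Perm.mul_apply, Equiv.swap_apply_of_ne_of_ne h1 h2]
        subst hy; exact hstep
  · exact hpair

lemma qc_rpair_swap (β : Perm X) (u v : X) :
    qc (rpair (sstep β) u v) = qc (rpair (sstep (Equiv.swap u v * β)) u v) := by
  refine qc_eq_of ?_ (rpair_swap_incl β u v)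
  have h := rpair_swap_incl (Equiv.swap u v * β) u v
  rwa [Equiv.swap_mul_self_mul] at h

lemma dpair_swap_incl (α β : Perm X) (u v : X) :
    ∀ x y, rpair (dstep (Equiv.swap u v * α) β) u v x y →
      EqvGen (rpair (dstep α β) u v) x y := by
  intro x y hxy
  have hpair : EqvGen (rpair (dstep α β) u v) u v := EqvGen.rel _ _ (Or.inr ⟨rfl, rfl⟩)
  rcases hxy with h' | ⟨rfl, rfl⟩
  swap
  · exact hpair
  rcases (h' : y = (Equiv.swap u v * α) x ∨ y = β x) with h | h
  · have hstep : EqvGen (rpair (dstep α β) u v) x (α x) := EqvGen.rel _ _ (Or.inl (Or.inl rfl))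
    by_cases h1 : α x = u
    · have hy : y = v := by rw [h, Perm.mul_apply, h1, Equiv.swap_apply_left]
      subst hy
      exact hstep.trans _ _ _ (h1 ▸ hpair)
    · by_cases h2 : α x = v
      · have hy : y = u := by rw [h, Perm.mul_apply, h2, Equiv.swap_apply_right]
        subst hy
        exact hstep.trans _ _ _ (h2 ▸ hpair.symm)
      · have hy : y = α x := by rw [h, Perm.mul_apply, Equiv.swap_apply_of_ne_of_ne h1 h2]
        subst hy; exact hstep
  · exact EqvGen.rel _ _ (Or.inl (Or.inr h))

lemma qc_dpair_swap (α β : Perm X) (u v : X) :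
    qc (rpair (dstep α β) u v) = qc (rpair (dstep (Equiv.swap u v * α) β) u v) := by
  refine qc_eq_of ?_ (dpair_swap_incl α β u v)
  have h := dpair_swap_incl (Equiv.swap u v * α) β u v
  rwa [Equiv.swap_mul_self_mul] at h

lemma cyc_swap_mul_add_one {α : Perm X} {u : X} (hu : α u ≠ u) :
    cyc (Equiv.swap u (α u) * α) = cyc α + 1 := by
  set v := α u with hv
  have h1 : qc (rpair (sstep α) u v) = cyc α :=
    qc_rpair_eq_of_rel (EqvGen.rel _ _ rfl)
  have h2 : ¬ EqvGen (sstep (Equiv.swap u v * α)) u v := by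
    rw [eqvGen_sstep_iff]
    rintro ⟨k, hk⟩
    have hfix : Function.IsFixedPt (⇑(Equiv.swap u v * α)) u := by
      show (Equiv.swap u v) (α u) = u
      rw [← hv, Equiv.swap_apply_right]
    have := hfix.perm_zpow k
    rw [Function.IsFixedPt] at this
    rw [this] at hk
    exact hu hk.symm
  have h3 := qc_rpair_lt_of_not_rel h2
  have h4 := qc_le_qc_rpair_add_one (sstep (Equiv.swap u v * α)) u v
  have h5 := qc_rpair_swap α u v
  show cyc _ = cyc α + 1
  unfold cyc at *
  omega

lemma cyc_le_swap_mul_add_one (γ : Perm X) (u v : X) :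
    cyc γ ≤ cyc (Equiv.swap u v * γ) + 1 := by
  have h1 := qc_le_qc_rpair_add_one (sstep γ) u v
  have h2 := qc_rpair_swap γ u v
  have h3 := qc_rpair_le (sstep (Equiv.swap u v * γ)) u v
  unfold cyc at *
  omega

lemma cyc_lt_swap_mul {γ : Perm X} {u v : X} (hsc : γ.SameCycle u v)
    (hnsc : ¬ (Equiv.swap u v * γ).SameCycle u v) :
    cyc γ < cyc (Equiv.swap u v * γ) := by
  have h1 : qc (rpair (sstep γ) u v) = cyc γ :=
    qc_rpair_eq_of_rel (eqvGen_sstep_iff.mpr hsc)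
  have h2 := qc_rpair_swap γ u v
  have h3 := qc_rpair_lt_of_not_rel
    (show ¬ EqvGen (sstep (Equiv.swap u v * γ)) u v by
      rw [eqvGen_sstep_iff]; exact hnsc)
  unfold cyc at *
  omega

lemma orb2_swap_mul_le (α β : Perm X) (u : X) :
    orb2 (Equiv.swap u (α u) * α) β ≤ orb2 α β + 1 := by
  have h1 : qc (rpair (dstep α β) u (α u)) = orb2 α β :=
    qc_rpair_eq_of_rel (EqvGen.rel _ _ (Or.inl rfl))
  have h2 := qc_dpair_swap α β u (α u)
  have h3 := qc_le_qc_rpair_add_one (dstep (Equiv.swap u (α u) * α) β) u (α u)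
  unfold orb2 at *
  omega

lemma orb2_swap_mul_eq {α β : Perm X} {u : X}
    (h : EqvGen (dstep (Equiv.swap u (α u) * α) β) u (α u)) :
    orb2 (Equiv.swap u (α u) * α) β = orb2 α β := by
  have h1 : qc (rpair (dstep α β) u (α u)) = orb2 α β :=
    qc_rpair_eq_of_rel (EqvGen.rel _ _ (Or.inl rfl))
  have h2 := qc_dpair_swap α β u (α u)
  have h4 : qc (rpair (dstep (Equiv.swap u (α u) * α) β) u (α u))
      = orb2 (Equiv.swap u (α u) * α) β := qc_rpair_eq_of_rel h
  unfold orb2 at *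
  omega

lemma orb2_le_cyc_mul (α β : Perm X) : orb2 α β ≤ cyc (α * β) := by
  refine qc_le_of (fun x y hxy => ?_)
  exact (EqvGen.rel x (β x) (Or.inr rfl)).trans _ _ _
    (EqvGen.rel _ _ (Or.inl (by rw [hxy]; rfl)))

theorem cyc_add_ineq (α β : Perm X) :
    cyc α + cyc β + cyc (α * β) ≤ Fintype.card X + 2 * orb2 α β := by
  have base : ∀ α : Perm X, cyc α = Fintype.card X →
      cyc α + cyc β + cyc (α * β) ≤ Fintype.card X + 2 * orb2 α β := by
    intro α hα
    have h1 : α = 1 := eq_one_of_cyc_eq_card hα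
    subst h1
    rw [hα, one_mul, orb2_one_left]
    omega
  suffices H : ∀ n (α : Perm X), Fintype.card X - cyc α ≤ n →
      cyc α + cyc β + cyc (α * β) ≤ Fintype.card X + 2 * orb2 α β from
    H (Fintype.card X - cyc α) α le_rfl
  intro n
  induction n with
  | zero =>
    intro α hα
    have := qc_le_card (sstep α)
    exact base α (by unfold cyc at *; omega)
  | succ n ih =>
    intro α hα
    by_cases hcard : cyc α = Fintype.card X
    · exact base α hcard
    · have hlt : cyc α < Fintype.card X := lt_of_le_of_ne (qc_le_card _) hcard
      have hne : α ≠ 1 := fun h => hcard (h ▸ cyc_one)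
      obtain ⟨u, hu⟩ : ∃ u, α u ≠ u := by
        by_contra hc
        push_neg at hc
        exact hne (Equiv.ext hc)
      have hca' : cyc (Equiv.swap u (α u) * α) = cyc α + 1 := cyc_swap_mul_add_one hu
      set v := α u with hv
      set α' := Equiv.swap u v * α with hα'
      have hm : Fintype.card X - cyc α' ≤ n := by omega
      have IH := ih α' hm
      have hmul : α' * β = Equiv.swap u v * (α * β) := by rw [hα', mul_assoc]
      by_cases hsc : (α' * β).SameCycle u v
      · have horb : orb2 α' β = orb2 α β := by
          refine orb2_swap_mul_eq ?_
          have hg : EqvGen (sstep (α' * β)) u v := eqvGen_sstep_iff.mpr hsc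
          refine eqvGen_closure (fun x y hxy => ?_) hg
          exact (EqvGen.rel x (β x) (Or.inr rfl)).trans _ _ _
            (EqvGen.rel _ _ (Or.inl (by rw [hxy]; rfl)))
        have hcycg : cyc (α * β) ≤ cyc (α' * β) + 1 := by
          rw [hmul]; exact cyc_le_swap_mul_add_one (α * β) u v
        omega
      · have huv : u ≠ v := fun h => hu h.symm
        have hscg : (α * β).SameCycle u v := by
          have hd := sameCycle_swap_mul_of_not (α' * β) huv hsc
          rwa [hmul, Equiv.swap_mul_self_mul] at hd
        have hcycg : cyc (α * β) < cyc (α' * β) := by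
          have hd := cyc_lt_swap_mul hscg (by rw [← hmul]; exact hsc)
          rwa [← hmul] at hd
        have horb : orb2 α' β ≤ orb2 α β + 1 := orb2_swap_mul_le α β u
        omega

end SPolyAux

namespace SPolyAux
open Relation Equiv

variable (G : RibbonGraph) (D : Finset G.EdgeSet)

/-- kept half-edges -/
def Kept : Type := {h : G.H // G.edgeOf h ∉ D}

noncomputable instance : Fintype (Kept G D) := by unfold Kept; infer_instance
instance : DecidableEq (Kept G D) := fun a b => Classical.propDecidable _

lemma edgeOf_pair (h : G.H) : G.edgeOf (G.edgePair h) = G.edgeOf h :=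
  Quotient.sound ⟨1, by simpa using G.edgePair_invol h⟩

/-- restriction of the edge-pairing to kept half-edges -/
def tau : Perm (Kept G D) where
  toFun := fun x => ⟨G.edgePair x.1, by rw [edgeOf_pair]; exact x.2⟩
  invFun := fun x => ⟨G.edgePair x.1, by rw [edgeOf_pair]; exact x.2⟩
  left_inv := fun x => Subtype.ext (G.edgePair_invol x.1)
  right_inv := fun x => Subtype.ext (G.edgePair_invol x.1)

lemma tau_invol (x : Kept G D) : tau G D (tau G D x) = x :=
  Subtype.ext (G.edgePair_invol x.1)

lemma tau_nofix (x : Kept G D) : tau G D x ≠ x :=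
  fun h => G.edgePair_nofix x.1 (congrArg Subtype.val h)

lemma exists_return (x : Kept G D) :
    ∃ j, 0 < j ∧ G.edgeOf ((G.rot ^ j) x.1) ∉ D :=
  ⟨orderOf G.rot, orderOf_pos G.rot, by rw [pow_orderOf_eq_one]; exact x.2⟩

/-- first return time of the rotation to the kept half-edges -/
noncomputable def retTime (x : Kept G D) : ℕ := Nat.find (exists_return G D x)

lemma retTime_pos (x : Kept G D) : 0 < retTime G D x :=
  (Nat.find_spec (exists_return G D x)).1

noncomputable def psifun (x : Kept G D) : Kept G D :=
  ⟨(G.rot ^ retTime G D x) x.1, (Nat.find_spec (exists_return G D x)).2⟩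

lemma psifun_inj_aux (x1 x2 : Kept G D) (hle : retTime G D x1 ≤ retTime G D x2)
    (h : psifun G D x1 = psifun G D x2) : x1 = x2 := by
  set m1 := retTime G D x1 with hm1
  set m2 := retTime G D x2 with hm2
  have hval : (G.rot ^ m1) x1.1 = (G.rot ^ m2) x2.1 := congrArg Subtype.val h
  rcases eq_or_lt_of_le hle with heq | hlt
  · rw [← heq] at hval
    exact Subtype.ext ((G.rot ^ m1).injective hval)
  · exfalso
    have hsplit : (G.rot ^ m1) ((G.rot ^ (m2 - m1)) x2.1) = (G.rot ^ m1) x1.1 := by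
      rw [← Perm.mul_apply, ← pow_add]
      rw [show m1 + (m2 - m1) = m2 by omega]
      exact hval.symm
    have hx1 : (G.rot ^ (m2 - m1)) x2.1 = x1.1 := (G.rot ^ m1).injective hsplit
    have hmin := Nat.find_min (exists_return G D x2) (show m2 - m1 < m2 by
      have := retTime_pos G D x1; omega)
    exact hmin ⟨by have := retTime_pos G D x1; omega, by rw [hx1]; exact x1.2⟩

lemma psifun_injective : Function.Injective (psifun G D) := by
  intro x1 x2 h
  rcases le_total (retTime G D x1) (retTime G D x2) with hle | hle
  · exact psifun_inj_aux G D x1 x2 hle h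
  · exact (psifun_inj_aux G D x2 x1 hle h.symm).symm

/-- the first-return map of the rotation, a permutation of the kept half-edges -/
noncomputable def psi : Perm (Kept G D) :=
  Equiv.ofBijective (psifun G D) (Finite.injective_iff_bijective.mp (psifun_injective G D))

lemma psi_apply (x : Kept G D) : psi G D x = psifun G D x := rfl

lemma faceStep_iff (x y : G.H) :
    G.faceStep D x y ↔ ∃ (hx : G.edgeOf x ∉ D) (hy : G.edgeOf y ∉ D),
      (⟨y, hy⟩ : Kept G D) = (psi G D * tau G D) ⟨x, hx⟩ := by
  constructor
  · rintro ⟨hx, hy, m, hm0, heq, hmid⟩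
    refine ⟨hx, hy, ?_⟩
    have hx' : G.edgeOf (G.edgePair x) ∉ D := by rw [edgeOf_pair]; exact hx
    set a : Kept G D := ⟨G.edgePair x, hx'⟩ with ha
    have hmle : retTime G D a ≤ m := Nat.find_le ⟨hm0, by
      show G.edgeOf ((G.rot ^ m) a.1) ∉ D
      rw [ha, ← heq]; exact hy⟩
    have hmeq : retTime G D a = m := by
      rcases eq_or_lt_of_le hmle with h | h
      · exact h
      · exact absurd ((Nat.find_spec (exists_return G D a)).2)
          (by rw [not_not]; exact hmid _ (retTime_pos G D a) h)
    show _ = psi G D (tau G D ⟨x, hx⟩)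
    rw [psi_apply]
    apply Subtype.ext
    show y = (G.rot ^ retTime G D a) a.1
    rw [hmeq, heq]
  · rintro ⟨hx, hy, hval⟩
    have hx' : G.edgeOf (G.edgePair x) ∉ D := by rw [edgeOf_pair]; exact hx
    set a : Kept G D := ⟨G.edgePair x, hx'⟩ with ha
    have hyval : y = (G.rot ^ retTime G D a) (G.edgePair x) := congrArg Subtype.val hval
    refine ⟨hx, hy, retTime G D a, retTime_pos G D a, hyval, ?_⟩
    intro j hj0 hjm
    by_contra hcon
    exact Nat.find_min (exists_return G D a) hjm ⟨hj0, hcon⟩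


/-- `Quot r` and `Quot (EqvGen r)` agree -/
def quotEqvGenEquiv {α : Type} (r : α → α → Prop) : Quot r ≃ Quot (EqvGen r) where
  toFun := Quot.lift (fun a => Quot.mk _ a) (fun a b h => Quot.sound (EqvGen.rel a b h))
  invFun := Quot.lift (fun a => Quot.mk r a) (fun a b h => Quot.eqvGen_sound h)
  left_inv := by intro q; induction q using Quot.ind; rfl
  right_inv := by intro q; induction q using Quot.ind; rfl

lemma eqvGen_faceStep_cases {a b : G.H} (h : EqvGen (G.faceStep D) a b) :
    a = b ∨ ∃ (ha : G.edgeOf a ∉ D) (hb : G.edgeOf b ∉ D),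
      EqvGen (sstep (psi G D * tau G D)) ⟨a, ha⟩ ⟨b, hb⟩ := by
  induction h with
  | rel u v huv =>
    obtain ⟨hu, hv, heq⟩ := (faceStep_iff G D u v).mp huv
    exact Or.inr ⟨hu, hv, EqvGen.rel _ _ heq⟩
  | refl u => exact Or.inl rfl
  | symm u v _ ih =>
    rcases ih with rfl | ⟨hu, hv, h⟩
    · exact Or.inl rfl
    · exact Or.inr ⟨hv, hu, h.symm⟩
  | trans u v w _ _ ih1 ih2 =>
    rcases ih1 with rfl | ⟨hu, hv, h1⟩
    · exact ih2
    · rcases ih2 with rfl | ⟨hv', hw, h2⟩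
      · exact Or.inr ⟨hu, hv, h1⟩
      · exact Or.inr ⟨hu, hw, h1.trans _ _ _ h2⟩

def FacesT : Type := {c : Quotient (G.faceSetoid D) //
    ∃ h, G.edgeOf h ∉ D ∧ Quotient.mk (G.faceSetoid D) h = c}

def facesMap : Quot (sstep (psi G D * tau G D)) → FacesT G D :=
  Quot.lift (fun x : Kept G D =>
      (⟨Quotient.mk (G.faceSetoid D) x.1, ⟨x.1, x.2, rfl⟩⟩ : FacesT G D))
    (by
      intro x y hxy
      refine Subtype.ext ?_
      refine Quotient.sound ?_
      show EqvGen (G.faceStep D) x.1 y.1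
      exact EqvGen.rel _ _ ((faceStep_iff G D x.1 y.1).mpr ⟨x.2, y.2, hxy⟩))

lemma faces_count : Nat.card (FacesT G D) = cyc (psi G D * tau G D) := by
  have hinj : Function.Injective (facesMap G D) := by
    intro q1 q2 h
    induction q1 using Quot.ind with | _ x =>
    induction q2 using Quot.ind with | _ y =>
    have hmk : Quotient.mk (G.faceSetoid D) x.1 = Quotient.mk (G.faceSetoid D) y.1 :=
      congrArg Subtype.val h
    have hex : EqvGen (G.faceStep D) x.1 y.1 := Quotient.exact hmk
    rcases eqvGen_faceStep_cases G D hex with heq | ⟨ha, hb, hE⟩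
    · exact congrArg _ (Subtype.ext heq)
    · exact Quot.eqvGen_sound hE
  have hsurj : Function.Surjective (facesMap G D) := by
    rintro ⟨c, h, hk, rfl⟩
    exact ⟨Quot.mk _ ⟨h, hk⟩, rfl⟩
  exact (Nat.card_congr (Equiv.ofBijective _ ⟨hinj, hsurj⟩)).symm

lemma reach : ∀ (n : ℕ) (x y : Kept G D), (G.rot ^ n) x.1 = y.1 →
    EqvGen (sstep (psi G D)) x y := by
  intro n
  induction n using Nat.strong_induction_on with
  | _ n ih =>
    intro x y hxy
    rcases Nat.eq_zero_or_pos n with rfl | hn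
    · simp only [pow_zero, Perm.one_apply] at hxy
      exact (Subtype.ext hxy : x = y) ▸ EqvGen.refl x
    · have hm : retTime G D x ≤ n := Nat.find_le ⟨hn, by rw [hxy]; exact y.2⟩
      have hstep : EqvGen (sstep (psi G D)) x (psi G D x) := EqvGen.rel _ _ rfl
      have hval : (G.rot ^ (n - retTime G D x)) (psi G D x).1 = y.1 := by
        show (G.rot ^ (n - retTime G D x)) ((G.rot ^ retTime G D x) x.1) = y.1
        rw [← Perm.mul_apply, ← pow_add, show n - retTime G D x + retTime G D x = n by omega]
        exact hxy
      have hlt : n - retTime G D x < n := by have := retTime_pos G D x; omega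
      exact hstep.trans _ _ _ (ih _ hlt (psi G D x) y hval)

lemma reach_of_sameCycle {x y : Kept G D} (h : G.rot.SameCycle x.1 y.1) :
    EqvGen (sstep (psi G D)) x y := by
  obtain ⟨i, _, _, hi⟩ := h.exists_pow_eq G.rot
  exact reach G D i x y hi

lemma reach2 {x y : Kept G D} (h : G.rot.SameCycle x.1 y.1) :
    EqvGen (dstep (psi G D) (tau G D)) x y :=
  eqvGen_closure (fun a b hab => EqvGen.rel _ _ (Or.inl hab)) (reach_of_sameCycle G D h)

lemma vertexOf_psi (x : Kept G D) : G.rot.SameCycle x.1 ((psi G D x).1) :=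
  ⟨(retTime G D x : ℤ), by rw [zpow_natCast]; rfl⟩

/-- a vertex is fully deleted -/
def FullDel (v : G.VertexSet) : Prop := ∀ h, G.vertexOf h = v → G.edgeOf h ∈ D

lemma pick_ex (v : G.VertexSet) (hfd : ¬ FullDel G D v) :
    ∃ h, G.vertexOf h = v ∧ G.edgeOf h ∉ D := by
  unfold FullDel at hfd; push_neg at hfd; exact hfd

noncomputable def pick (v : G.VertexSet) (hfd : ¬ FullDel G D v) : Kept G D :=
  ⟨(pick_ex G D v hfd).choose, (pick_ex G D v hfd).choose_spec.2⟩

lemma pick_vertexOf (v : G.VertexSet) (hfd : ¬ FullDel G D v) :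
    G.vertexOf (pick G D v hfd).1 = v :=
  (pick_ex G D v hfd).choose_spec.1

lemma not_fullDel_of_kept (x : Kept G D) : ¬ FullDel G D (G.vertexOf x.1) :=
  fun hall => x.2 (hall x.1 rfl)

lemma quotmk_eq_of_same_vertex {x y : Kept G D} (h : G.vertexOf x.1 = G.vertexOf y.1) :
    Quot.mk (dstep (psi G D) (tau G D)) x = Quot.mk _ y :=
  Quot.eqvGen_sound (reach2 G D (Quotient.exact h))

/-- the invariant classifying connected components -/
noncomputable def Fv (v : G.VertexSet) :
    Quot (dstep (psi G D) (tau G D)) ⊕ G.VertexSet :=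
  if hfd : FullDel G D v then Sum.inr v else Sum.inl (Quot.mk _ (pick G D v hfd))

noncomputable def rho (h : G.H) : Quot (dstep (psi G D) (tau G D)) ⊕ G.VertexSet :=
  Fv G D (G.vertexOf h)

lemma rho_kept (x : Kept G D) : rho G D x.1 = Sum.inl (Quot.mk _ x) := by
  unfold rho Fv
  rw [dif_neg (not_fullDel_of_kept G D x)]
  exact congrArg Sum.inl
    (quotmk_eq_of_same_vertex G D (by rw [pick_vertexOf]))

lemma rho_invariant : ∀ a b, G.connStep D a b → rho G D a = rho G D b := by
  intro a b hab
  rcases hab with hsc | ⟨ha, rfl⟩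
  · unfold rho
    rw [show G.vertexOf a = G.vertexOf b from Quotient.sound hsc]
  · set x : Kept G D := ⟨a, ha⟩ with hx
    have h1 : rho G D a = Sum.inl (Quot.mk _ x) := rho_kept G D x
    have h2 : rho G D (G.edgePair a) = Sum.inl (Quot.mk _ (tau G D x)) :=
      rho_kept G D (tau G D x)
    rw [h1, h2]
    exact congrArg Sum.inl (Quot.sound (show dstep (psi G D) (tau G D) x (tau G D x) from
      Or.inr rfl))

noncomputable def rhobar : Quot (G.connStep D) → Quot (dstep (psi G D) (tau G D)) ⊕ G.VertexSet :=
  Quot.lift (rho G D) (rho_invariant G D)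

def vmapc : G.VertexSet → Quot (G.connStep D) :=
  Quotient.lift (fun h => Quot.mk (G.connStep D) h)
    (fun a b hab => Quot.sound (Or.inl hab))

def quotKmap : Quot (dstep (psi G D) (tau G D)) → Quot (G.connStep D) :=
  Quot.lift (fun x : Kept G D => Quot.mk (G.connStep D) x.1)
    (by
      intro x y hxy
      rcases hxy with h | h
      · exact Quot.sound (Or.inl (by
          rw [show y.1 = (psi G D x).1 from congrArg Subtype.val h]
          exact vertexOf_psi G D x))
      · exact Quot.sound (Or.inr ⟨x.2, congrArg Subtype.val h⟩))

noncomputable def Phi :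
    Quot (dstep (psi G D) (tau G D)) ⊕ {v : G.VertexSet // FullDel G D v} →
      Quot (G.connStep D) :=
  Sum.elim (quotKmap G D) (fun v => vmapc G D v.1)

lemma b0_count :
    G.b0Del D = orb2 (psi G D) (tau G D) + Nat.card {v : G.VertexSet // FullDel G D v} := by
  have hb0 : G.b0Del D = Nat.card (Quot (EqvGen (G.connStep D))) := rfl
  rw [hb0, ← Nat.card_congr (quotEqvGenEquiv (G.connStep D))]
  have comp_inl : ∀ q, rhobar G D (Phi G D (Sum.inl q)) = Sum.inl q := by
    intro q
    induction q using Quot.ind with | _ x =>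
    exact rho_kept G D x
  have comp_inr : ∀ v : {v : G.VertexSet // FullDel G D v},
      rhobar G D (Phi G D (Sum.inr v)) = Sum.inr v.1 := by
    rintro ⟨v, hv⟩
    obtain ⟨h, hh⟩ := Quotient.exists_rep v
    subst hh
    show rho G D h = Sum.inr _
    exact dif_pos hv
  have hinj : Function.Injective (Phi G D) := by
    intro s1 s2 h
    have h' := congrArg (rhobar G D) h
    match s1, s2 with
    | Sum.inl q1, Sum.inl q2 =>
      rw [comp_inl, comp_inl] at h'
      exact congrArg Sum.inl (Sum.inl.inj h')
    | Sum.inl q1, Sum.inr v2 =>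
      rw [comp_inl, comp_inr] at h'
      exact absurd h' (by simp)
    | Sum.inr v1, Sum.inl q2 =>
      rw [comp_inl, comp_inr] at h'
      exact absurd h' (by simp)
    | Sum.inr v1, Sum.inr v2 =>
      rw [comp_inr, comp_inr] at h'
      exact congrArg Sum.inr (Subtype.ext (Sum.inr.inj h'))
  have hsurj : Function.Surjective (Phi G D) := by
    intro q
    induction q using Quot.ind with | _ h =>
    by_cases hk : G.edgeOf h ∉ D
    · exact ⟨Sum.inl (Quot.mk _ ⟨h, hk⟩), rfl⟩
    · by_cases hfd : FullDel G D (G.vertexOf h)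
      · exact ⟨Sum.inr ⟨G.vertexOf h, hfd⟩, rfl⟩
      · obtain ⟨h', hv', hk'⟩ := pick_ex G D _ hfd
        refine ⟨Sum.inl (Quot.mk _ ⟨h', hk'⟩), ?_⟩
        exact Quot.sound (Or.inl (Quotient.exact hv'))
  rw [← Nat.card_congr (Equiv.ofBijective _ ⟨hinj, hsurj⟩), Nat.card_sum]
  rfl

def vQmap : Quot (sstep (psi G D)) → G.VertexSet :=
  Quot.lift (fun x : Kept G D => G.vertexOf x.1)
    (by
      intro x y hxy
      refine Quotient.sound ?_
      rw [show y.1 = (psi G D x).1 from congrArg Subtype.val hxy]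
      exact vertexOf_psi G D x)

lemma v_count :
    G.numVertices = cyc (psi G D) + Nat.card {v : G.VertexSet // FullDel G D v} := by
  have hinj : Function.Injective
      (Sum.elim (vQmap G D) (fun v : {v : G.VertexSet // FullDel G D v} => v.1)) := by
    intro s1 s2 h
    match s1, s2 with
    | Sum.inl q1, Sum.inl q2 =>
      induction q1 using Quot.ind with | _ x =>
      induction q2 using Quot.ind with | _ y =>
      exact congrArg Sum.inl (Quot.eqvGen_sound
        (reach_of_sameCycle G D (Quotient.exact (h : G.vertexOf x.1 = G.vertexOf y.1))))
    | Sum.inl q1, Sum.inr v2 =>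
      exfalso
      induction q1 using Quot.ind with | _ x =>
      have h' : G.vertexOf x.1 = v2.1 := h
      exact (not_fullDel_of_kept G D x) (h' ▸ v2.2)
    | Sum.inr v1, Sum.inl q2 =>
      exfalso
      induction q2 using Quot.ind with | _ x =>
      have h' : v1.1 = G.vertexOf x.1 := h
      exact (not_fullDel_of_kept G D x) (h' ▸ v1.2)
    | Sum.inr v1, Sum.inr v2 =>
      exact congrArg Sum.inr (Subtype.ext h)
  have hsurj : Function.Surjective
      (Sum.elim (vQmap G D) (fun v : {v : G.VertexSet // FullDel G D v} => v.1)) := by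
    intro v
    by_cases hfd : FullDel G D v
    · exact ⟨Sum.inr ⟨v, hfd⟩, rfl⟩
    · exact ⟨Sum.inl (Quot.mk _ (pick G D v hfd)), pick_vertexOf G D v hfd⟩
  have hc := Nat.card_congr (Equiv.ofBijective _ ⟨hinj, hsurj⟩)
  rw [Nat.card_sum] at hc
  exact hc.symm

lemma pair_zpow (k : ℤ) : G.edgePair ^ k = 1 ∨ G.edgePair ^ k = G.edgePair := by
  have h2 : G.edgePair ^ (2:ℤ) = 1 := by
    ext h
    show (G.edgePair ^ (2:ℤ)) h = h
    rw [show (2:ℤ) = 1 + 1 from rfl, zpow_add, zpow_one, Perm.mul_apply]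
    exact G.edgePair_invol h
  have hk : G.edgePair ^ k = G.edgePair ^ (k % 2) := by
    conv_lhs => rw [← Int.mul_ediv_add_emod k 2]
    rw [zpow_add, zpow_mul, h2, one_zpow, one_mul]
  rcases Int.emod_two_eq k with h | h
  · rw [hk, h, zpow_zero]; exact Or.inl rfl
  · rw [hk, h, zpow_one]; exact Or.inr rfl

lemma sameCycle_pair_cases {a b : G.H} (h : G.edgePair.SameCycle a b) :
    b = a ∨ b = G.edgePair a := by
  obtain ⟨k, hk⟩ := h
  rcases pair_zpow G k with h1 | h1 <;> rw [h1] at hk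
  · exact Or.inl hk.symm
  · exact Or.inr hk.symm

def eQmap : Quot (sstep (tau G D)) → {e : G.EdgeSet // e ∉ D} :=
  Quot.lift (fun x : Kept G D => (⟨G.edgeOf x.1, x.2⟩ : {e : G.EdgeSet // e ∉ D}))
    (by
      intro x y hxy
      refine Subtype.ext ?_
      exact ((congrArg G.edgeOf (congrArg Subtype.val hxy)).trans (edgeOf_pair G x.1)).symm)

lemma edges_count : G.numEdgesDel D = cyc (tau G D) := by
  have key : cyc (tau G D) = Nat.card {e : G.EdgeSet // e ∉ D} := by
    have hinj : Function.Injective (eQmap G D) := by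
      intro q1 q2 h
      induction q1 using Quot.ind with | _ x =>
      induction q2 using Quot.ind with | _ y =>
      have hE : G.edgePair.SameCycle x.1 y.1 :=
        Quotient.exact (congrArg Subtype.val h : G.edgeOf x.1 = G.edgeOf y.1)
      rcases sameCycle_pair_cases G hE with h1 | h1
      · exact congrArg _ (Subtype.ext h1.symm)
      · exact Quot.sound (Subtype.ext h1 : sstep (tau G D) x y)
    have hsurj : Function.Surjective (eQmap G D) := by
      rintro ⟨e, he⟩
      obtain ⟨h, rfl⟩ := Quotient.exists_rep e
      exact ⟨Quot.mk _ ⟨h, he⟩, rfl⟩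
    exact Nat.card_congr (Equiv.ofBijective _ ⟨hinj, hsurj⟩)
  have hcompl : Nat.card {e : G.EdgeSet // e ∉ D} = G.numEdges - D.card := by
    rw [Nat.card_eq_fintype_card]
    rw [Fintype.card_subtype_compl (fun e => e ∈ D)]
    congr 1
    · rw [RibbonGraph.numEdges, Nat.card_eq_fintype_card]
    · simp
  rw [RibbonGraph.numEdgesDel, ← hcompl, key]

lemma eqvGen_sstep_tau_cases {x y : Kept G D} (h : EqvGen (sstep (tau G D)) x y) :
    y = x ∨ y = tau G D x := by
  induction h with
  | rel u v huv => exact Or.inr huv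
  | refl u => exact Or.inl rfl
  | symm u v _ ih =>
    rcases ih with rfl | rfl
    · exact Or.inl rfl
    · exact Or.inr (tau_invol G D u).symm
  | trans u v w _ _ ih1 ih2 =>
    rcases ih1 with rfl | rfl
    · exact ih2
    · rcases ih2 with rfl | rfl
      · exact Or.inr rfl
      · exact Or.inl (tau_invol G D u)

noncomputable def kmap : Kept G D → Quot (sstep (tau G D)) × Bool := fun x =>
  (Quot.mk _ x, if x = (Quot.mk (sstep (tau G D)) x).out then true else false)

lemma kept_card : Fintype.card (Kept G D) = 2 * cyc (tau G D) := by
  have hinj : Function.Injective (kmap G D) := by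
    intro x y h
    have h1 : Quot.mk (sstep (tau G D)) x = Quot.mk _ y := congrArg Prod.fst h
    have h2 : (if x = (Quot.mk (sstep (tau G D)) x).out then true else false)
        = (if y = (Quot.mk (sstep (tau G D)) y).out then true else false) :=
      congrArg Prod.snd h
    rcases eqvGen_sstep_tau_cases G D (Quot.eq.mp h1) with rfl | rfl
    · rfl
    · exfalso
      set c := Quot.mk (sstep (tau G D)) x with hcdef
      have hout : x = c.out ∨ x = tau G D c.out :=
        eqvGen_sstep_tau_cases G D (Quot.eq.mp (Quot.out_eq c))
      rw [← h1] at h2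
      rcases hout with hx | hx
      · rw [if_pos hx, if_neg (fun hcon : tau G D x = c.out =>
          tau_nofix G D x (hcon.trans hx.symm))] at h2
        exact Bool.noConfusion h2
      · have hxne : x ≠ c.out := fun hcon => tau_nofix G D c.out (hx.symm.trans hcon)
        have hxt : tau G D x = c.out := by rw [hx, tau_invol]
        rw [if_neg hxne, if_pos hxt] at h2
        exact Bool.noConfusion h2
  have hsurj : Function.Surjective (kmap G D) := by
    rintro ⟨c, b⟩
    cases b
    · refine ⟨tau G D c.out, ?_⟩
      have hmk : Quot.mk (sstep (tau G D)) (tau G D c.out) = c :=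
        (Quot.sound (show sstep (tau G D) c.out (tau G D c.out) from rfl)).symm.trans
          (Quot.out_eq c)
      unfold kmap
      rw [hmk]
      refine Prod.ext rfl ?_
      rw [if_neg (tau_nofix G D c.out)]
    · refine ⟨c.out, ?_⟩
      unfold kmap
      rw [Quot.out_eq]
      exact Prod.ext rfl (if_pos rfl)
  have hc := Nat.card_congr (Equiv.ofBijective _ ⟨hinj, hsurj⟩)
  rw [Nat.card_prod, Nat.card_eq_fintype_card, Nat.card_eq_fintype_card (α := Bool)] at hc
  simp only [Fintype.card_bool] at hc
  rw [hc]
  show cyc (tau G D) * 2 = 2 * cyc (tau G D)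
  ring

lemma exponent_iff (G : RibbonGraph) (D : Finset G.EdgeSet) :
    (G.b1Del D - G.genusDel D).toNat = 0 ↔ (G.b1Del D).toNat = 0 := by
  have hV := v_count G D
  have hb0 := b0_count G D
  have hE := edges_count G D
  have hfc := faces_count G D
  have hmain := cyc_add_ineq (psi G D) (tau G D)
  have hkc := kept_card G D
  have hzc := orb2_le_cyc_mul (psi G D) (tau G D)
  set x := cyc (psi G D) with hx
  set y := cyc (tau G D) with hy
  set z := cyc (psi G D * tau G D) with hz
  set c := orb2 (psi G D) (tau G D) with hc
  set w := Nat.card {v : G.VertexSet // FullDel G D v} with hw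
  have hf : G.facesDel D = z + w := by
    have : G.facesDel D = Nat.card (FacesT G D)
        + Nat.card {v : G.VertexSet // FullDel G D v} := rfl
    rw [this, hfc]
  have hb1 : G.b1Del D = (y : ℤ) - (x : ℤ) + (c : ℤ) := by
    rw [RibbonGraph.b1Del, hE, hV, hb0]
    push_cast
    ring
  have hq : G.b1Del D - (G.facesDel D : ℤ) + (G.b0Del D : ℤ)
      = (y : ℤ) - x + 2 * c - z := by
    rw [hb1, hf, hb0]
    push_cast
    ring
  have hgenus : G.genusDel D = ((y : ℤ) - x + 2 * c - z) / 2 := by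
    rw [RibbonGraph.genusDel, hq]
  have hnat1 : x + z ≤ y + 2 * c := by omega
  have hnat2 : x ≤ y + c := by omega
  have hq0 : (0 : ℤ) ≤ (y : ℤ) - x + 2 * c - z := by
    push_cast
    omega
  have hqle : (y : ℤ) - x + 2 * c - z ≤ G.b1Del D := by
    rw [hb1]
    push_cast
    omega
  have hb1nn : (0 : ℤ) ≤ G.b1Del D := by
    rw [hb1]
    push_cast
    omega
  rw [Int.toNat_eq_zero, Int.toNat_eq_zero, hgenus, hb1]
  rw [hb1] at hqle hb1nn
  constructor <;> intro <;> omega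

end SPolyAux

/-- For any virtual graph `G`, the `S`-polynomial and the flow polynomial of the
underlying graph agree at `Q = 0`: `S_G(0) = F_G(0)`. -/
theorem stmt12 (G : RibbonGraph) : G.SPoly.eval 0 = G.FPoly.eval 0 := by
  rw [RibbonGraph.SPoly, RibbonGraph.FPoly, Polynomial.eval_finset_sum,
    Polynomial.eval_finset_sum]
  refine Finset.sum_congr rfl (fun D _ => ?_)
  simp only [Polynomial.eval_mul, Polynomial.eval_pow, Polynomial.eval_X,
    Polynomial.eval_neg, Polynomial.eval_one]
  congr 1
  by_cases h : (G.b1Del D).toNat = 0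
  · rw [h, (SPolyAux.exponent_iff G D).mpr h]
  · rw [zero_pow (fun hc => h ((SPolyAux.exponent_iff G D).mp hc)), zero_pow h]
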